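/- Let Ω₁ ⊂ Ω₂ ⊂ ℂⁿ be domains and z, w ∈ Ω₁. Then |K_{Ω₁}(z,w) − K_{Ω₂}(z,w)| ≤ (K_{Ω₁}(z) − K_{Ω₂}(z)) + (K_{Ω₁}(w) − K_{Ω₂}(w)). -/

import Mathlib

open MeasureTheory Complex

section AuxCS
variable {α : Type*} [MeasurableSpace α] {μ : Measure α} {f g : α → ℂ}

lemma integrable_mul_conj (hf : MemLp f 2 μ) (hg : MemLp g 2 μ) :
    Integrable (fun x => f x * (starRingEnd ℂ) (g x)) μ := by
  have h := L2.integrable_inner (𝕜 := ℂ) (hg.toLp g) (hf.toLp f)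
  refine h.congr ?_
  filter_upwards [hf.coeFn_toLp, hg.coeFn_toLp] with x hfx hgx
  simp [RCLike.inner_apply, hfx, hgx, mul_comm]

lemma norm_toLp_sq (hf : MemLp f 2 μ) :
    ‖hf.toLp f‖ = Real.sqrt (∫ x, ‖f x‖ ^ 2 ∂μ) := by
  have hint := L2.integrable_inner (𝕜 := ℂ) (hf.toLp f) (hf.toLp f)
  have h2 : ‖hf.toLp f‖ ^ 2 = ∫ x, ‖f x‖ ^ 2 ∂μ := by
    have hn := norm_sq_eq_re_inner (𝕜 := ℂ) (hf.toLp f)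
    rw [hn, L2.inner_def, ← integral_re hint]
    refine integral_congr_ae ?_
    filter_upwards [hf.coeFn_toLp] with x hx
    rw [RCLike.inner_apply, hx, RCLike.mul_conj]
    simp [← Complex.ofReal_pow]
  rw [← h2, Real.sqrt_sq (norm_nonneg _)]

lemma cs_integral (hf : MemLp f 2 μ) (hg : MemLp g 2 μ) :
    ‖∫ x, f x * (starRingEnd ℂ) (g x) ∂μ‖
      ≤ Real.sqrt (∫ x, ‖f x‖ ^ 2 ∂μ) * Real.sqrt (∫ x, ‖g x‖ ^ 2 ∂μ) := by
  have key : (inner ℂ (hg.toLp g) (hf.toLp f) : ℂ) = ∫ x, f x * (starRingEnd ℂ) (g x) ∂μ := by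
    rw [L2.inner_def]
    refine integral_congr_ae ?_
    filter_upwards [hf.coeFn_toLp, hg.coeFn_toLp] with x hfx hgx
    simp [RCLike.inner_apply, hfx, hgx, mul_comm]
  calc ‖∫ x, f x * (starRingEnd ℂ) (g x) ∂μ‖ = ‖(inner ℂ (hg.toLp g) (hf.toLp f) : ℂ)‖ := by rw [key]
    _ ≤ ‖hg.toLp g‖ * ‖hf.toLp f‖ := norm_inner_le_norm _ _
    _ = Real.sqrt (∫ x, ‖f x‖ ^ 2 ∂μ) * Real.sqrt (∫ x, ‖g x‖ ^ 2 ∂μ) := by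
        rw [norm_toLp_sq hf, norm_toLp_sq hg, mul_comm]

end AuxCS

/-- `K` is the Bergman kernel of `Ω ⊆ ℂⁿ`: for each `z ∈ Ω`, `K(·,z)` belongs to the
Bergman space `A²(Ω)`, `K` is hermitian, and `K` reproduces every element of `A²(Ω)`. -/
def IsBergmanKernel {n : ℕ} (Ω : Set (Fin n → ℂ))
    (K : (Fin n → ℂ) → (Fin n → ℂ) → ℂ) : Prop :=
  (∀ z ∈ Ω, DifferentiableOn ℂ (fun w => K w z) Ω ∧
      IntegrableOn (fun w => ‖K w z‖ ^ 2) Ω) ∧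
  (∀ z ∈ Ω, ∀ w ∈ Ω, K z w = (starRingEnd ℂ) (K w z)) ∧
  (∀ f : (Fin n → ℂ) → ℂ, DifferentiableOn ℂ f Ω →
      IntegrableOn (fun w => ‖f w‖ ^ 2) Ω →
      ∀ z ∈ Ω, f z = ∫ w in Ω, f w * (starRingEnd ℂ) (K w z))

lemma bergman_mono {n : ℕ} (Ω₁ Ω₂ : Set (Fin n → ℂ))
    (hΩ₁open : IsOpen Ω₁) (hΩ₂open : IsOpen Ω₂) (h12 : Ω₁ ⊆ Ω₂)
    (K₁ K₂ : (Fin n → ℂ) → (Fin n → ℂ) → ℂ)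
    (hK₁ : IsBergmanKernel Ω₁ K₁) (hK₂ : IsBergmanKernel Ω₂ K₂)
    (z w : Fin n → ℂ) (hz : z ∈ Ω₁) (hw : w ∈ Ω₁) (c : ℂ) :
    (K₂ z z).re + Complex.normSq c * (K₂ w w).re + 2 * (c * K₂ z w).re
      ≤ (K₁ z z).re + Complex.normSq c * (K₁ w w).re + 2 * (c * K₁ z w).re := by
  obtain ⟨hK₁mem, hK₁herm, hK₁rep⟩ := hK₁
  obtain ⟨hK₂mem, hK₂herm, hK₂rep⟩ := hK₂
  have meas₁ : ∀ x ∈ Ω₁, MemLp (fun ζ => K₁ ζ x) 2 (volume.restrict Ω₁) := fun x hx =>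
    (memLp_two_iff_integrable_sq_norm
      (((hK₁mem x hx).1.continuousOn).aestronglyMeasurable hΩ₁open.measurableSet)).2
      (hK₁mem x hx).2
  have meas₂ : ∀ x ∈ Ω₂, MemLp (fun ζ => K₂ ζ x) 2 (volume.restrict Ω₂) := fun x hx =>
    (memLp_two_iff_integrable_sq_norm
      (((hK₂mem x hx).1.continuousOn).aestronglyMeasurable hΩ₂open.measurableSet)).2
      (hK₂mem x hx).2
  set u : (Fin n → ℂ) → ℂ := fun ζ => K₁ ζ z + c * K₁ ζ w with hu
  set h : (Fin n → ℂ) → ℂ := fun ζ => K₂ ζ z + c * K₂ ζ w with hh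
  have mu : MemLp u 2 (volume.restrict Ω₁) := (meas₁ z hz).add ((meas₁ w hw).const_mul c)
  have mh2 : MemLp h 2 (volume.restrict Ω₂) :=
    (meas₂ z (h12 hz)).add ((meas₂ w (h12 hw)).const_mul c)
  have mh1 : MemLp h 2 (volume.restrict Ω₁) :=
    mh2.mono_measure (Measure.restrict_mono h12 le_rfl)
  have du : DifferentiableOn ℂ u Ω₁ :=
    ((hK₁mem z hz).1).add (((hK₁mem w hw).1).const_mul c)
  have dh2 : DifferentiableOn ℂ h Ω₂ :=
    ((hK₂mem z (h12 hz)).1).add (((hK₂mem w (h12 hw)).1).const_mul c)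
  have dh1 : DifferentiableOn ℂ h Ω₁ := dh2.mono h12
  have iu : IntegrableOn (fun ζ => ‖u ζ‖ ^ 2) Ω₁ :=
    (memLp_two_iff_integrable_sq_norm mu.1).1 mu
  have ih2 : IntegrableOn (fun ζ => ‖h ζ‖ ^ 2) Ω₂ :=
    (memLp_two_iff_integrable_sq_norm mh2.1).1 mh2
  have ih1 : IntegrableOn (fun ζ => ‖h ζ‖ ^ 2) Ω₁ :=
    (memLp_two_iff_integrable_sq_norm mh1.1).1 mh1
  -- splitting lemma on Ω₁
  have split : ∀ f : (Fin n → ℂ) → ℂ, MemLp f 2 (volume.restrict Ω₁) →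
      DifferentiableOn ℂ f Ω₁ →
      ∫ ζ in Ω₁, f ζ * (starRingEnd ℂ) (u ζ)
        = f z + (starRingEnd ℂ) c * f w := by
    intro f mf df
    have i1 := integrable_mul_conj mf (meas₁ z hz)
    have i2 := integrable_mul_conj mf (meas₁ w hw)
    have if2 : IntegrableOn (fun ζ => ‖f ζ‖ ^ 2) Ω₁ :=
      (memLp_two_iff_integrable_sq_norm mf.1).1 mf
    have rz := hK₁rep f df if2 z hz
    have rw' := hK₁rep f df if2 w hw
    calc ∫ ζ in Ω₁, f ζ * (starRingEnd ℂ) (u ζ)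
        = ∫ ζ in Ω₁, (f ζ * (starRingEnd ℂ) (K₁ ζ z)
            + (starRingEnd ℂ) c * (f ζ * (starRingEnd ℂ) (K₁ ζ w))) := by
          refine integral_congr_ae (Filter.Eventually.of_forall fun ζ => ?_)
          simp only [hu, map_add, map_mul]
          ring
      _ = (∫ ζ in Ω₁, f ζ * (starRingEnd ℂ) (K₁ ζ z))
            + (starRingEnd ℂ) c * ∫ ζ in Ω₁, f ζ * (starRingEnd ℂ) (K₁ ζ w) := by
          rw [integral_add i1 (i2.const_mul _)]
          congr 1
          simpa [smul_eq_mul] using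
            integral_smul (μ := volume.restrict Ω₁) ((starRingEnd ℂ) c)
              (fun a : Fin n → ℂ => f a * (starRingEnd ℂ) (K₁ a w))
      _ = f z + (starRingEnd ℂ) c * f w := by rw [← rz, ← rw']
  have split₂ : ∫ ζ in Ω₂, h ζ * (starRingEnd ℂ) (h ζ)
      = h z + (starRingEnd ℂ) c * h w := by
    have i1 := integrable_mul_conj mh2 (meas₂ z (h12 hz))
    have i2 := integrable_mul_conj mh2 (meas₂ w (h12 hw))
    have rz := hK₂rep h dh2 ih2 z (h12 hz)
    have rw' := hK₂rep h dh2 ih2 w (h12 hw)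
    calc ∫ ζ in Ω₂, h ζ * (starRingEnd ℂ) (h ζ)
        = ∫ ζ in Ω₂, (h ζ * (starRingEnd ℂ) (K₂ ζ z)
            + (starRingEnd ℂ) c * (h ζ * (starRingEnd ℂ) (K₂ ζ w))) := by
          refine integral_congr_ae (Filter.Eventually.of_forall fun ζ => ?_)
          simp only [hh, map_add, map_mul]
          ring
      _ = (∫ ζ in Ω₂, h ζ * (starRingEnd ℂ) (K₂ ζ z))
            + (starRingEnd ℂ) c * ∫ ζ in Ω₂, h ζ * (starRingEnd ℂ) (K₂ ζ w) := by
          rw [integral_add i1 (i2.const_mul _)]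
          congr 1
          simpa [smul_eq_mul] using
            integral_smul (μ := volume.restrict Ω₂) ((starRingEnd ℂ) c)
              (fun a : Fin n → ℂ => h a * (starRingEnd ℂ) (K₂ a w))
      _ = h z + (starRingEnd ℂ) c * h w := by rw [← rz, ← rw']
  have hAcoe : ∫ ζ in Ω₁, u ζ * (starRingEnd ℂ) (u ζ)
      = ((∫ ζ in Ω₁, ‖u ζ‖ ^ 2 : ℝ) : ℂ) := by
    refine Eq.trans (integral_congr_ae (Filter.Eventually.of_forall fun ζ => ?_))
      (integral_ofReal (𝕜 := ℂ))
    show u ζ * (starRingEnd ℂ) (u ζ) = _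
    rw [RCLike.mul_conj]
    push_cast
    ring
  have hBcoe : ∫ ζ in Ω₂, h ζ * (starRingEnd ℂ) (h ζ)
      = ((∫ ζ in Ω₂, ‖h ζ‖ ^ 2 : ℝ) : ℂ) := by
    refine Eq.trans (integral_congr_ae (Filter.Eventually.of_forall fun ζ => ?_))
      (integral_ofReal (𝕜 := ℂ))
    show h ζ * (starRingEnd ℂ) (h ζ) = _
    rw [RCLike.mul_conj]
    push_cast
    ring
  set A : ℝ := ∫ ζ in Ω₁, ‖u ζ‖ ^ 2 with hA
  set B : ℝ := ∫ ζ in Ω₂, ‖h ζ‖ ^ 2 with hB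
  set B₁ : ℝ := ∫ ζ in Ω₁, ‖h ζ‖ ^ 2 with hB₁
  have hA0 : 0 ≤ A := integral_nonneg fun ζ => sq_nonneg _
  have hB0 : 0 ≤ B := integral_nonneg fun ζ => sq_nonneg _
  have hB₁0 : 0 ≤ B₁ := integral_nonneg fun ζ => sq_nonneg _
  have hB₁B : B₁ ≤ B :=
    setIntegral_mono_set ih2 (Filter.Eventually.of_forall fun ζ => sq_nonneg _)
      (HasSubset.Subset.eventuallyLE h12)
  have hAval : ((A : ℝ) : ℂ) = u z + (starRingEnd ℂ) c * u w := by
    rw [← hAcoe]; exact split u mu du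
  have hBval : ((B : ℝ) : ℂ) = h z + (starRingEnd ℂ) c * h w := by
    rw [← hBcoe]; exact split₂
  have hhu : ∫ ζ in Ω₁, h ζ * (starRingEnd ℂ) (u ζ) = ((B : ℝ) : ℂ) := by
    rw [split h mh1 dh1, ← hBval]
  have hcs : B ≤ Real.sqrt B₁ * Real.sqrt A := by
    have hc := cs_integral mh1 mu
    rw [hhu] at hc
    have hnB : ‖((B : ℝ) : ℂ)‖ = B := by
      rw [Complex.norm_real]
      exact _root_.abs_of_nonneg hB0
    calc B = ‖((B : ℝ) : ℂ)‖ := hnB.symm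
      _ ≤ _ := hc
  have hBA : B ≤ A := by
    have h1 : B ≤ Real.sqrt B * Real.sqrt A :=
      hcs.trans (mul_le_mul_of_nonneg_right (Real.sqrt_le_sqrt hB₁B) (Real.sqrt_nonneg _))
    nlinarith [Real.sq_sqrt hA0, Real.sq_sqrt hB0, Real.sqrt_nonneg A, Real.sqrt_nonneg B,
      sq_nonneg (Real.sqrt A - Real.sqrt B)]
  have hA_eq : A = (K₁ z z).re + Complex.normSq c * (K₁ w w).re + 2 * (c * K₁ z w).re := by
    have h1 : ((A : ℝ) : ℂ).re = A := Complex.ofReal_re _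
    rw [← h1, hAval, hu]
    simp only
    rw [hK₁herm w hw z hz]
    simp only [Complex.add_re, Complex.add_im, Complex.mul_re, Complex.mul_im,
      Complex.conj_re, Complex.conj_im, Complex.normSq_apply]
    ring
  have hB_eq : B = (K₂ z z).re + Complex.normSq c * (K₂ w w).re + 2 * (c * K₂ z w).re := by
    have h1 : ((B : ℝ) : ℂ).re = B := Complex.ofReal_re _
    rw [← h1, hBval, hh]
    simp only
    rw [hK₂herm w (h12 hw) z (h12 hz)]
    simp only [Complex.add_re, Complex.add_im, Complex.mul_re, Complex.mul_im,
      Complex.conj_re, Complex.conj_im, Complex.normSq_apply]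
    ring
  rw [← hA_eq, ← hB_eq]
  exact hBA

/-- If `Ω₁ ⊆ Ω₂` are domains in `ℂⁿ` and `z, w ∈ Ω₁`, then
`|K_{Ω₁}(z,w) − K_{Ω₂}(z,w)| ≤ (K_{Ω₁}(z) − K_{Ω₂}(z)) + (K_{Ω₁}(w) − K_{Ω₂}(w))`. -/
theorem bergman_kernel_difference_bound {n : ℕ} (Ω₁ Ω₂ : Set (Fin n → ℂ))
    (hΩ₁open : IsOpen Ω₁) (hΩ₁conn : IsConnected Ω₁)
    (hΩ₂open : IsOpen Ω₂) (hΩ₂conn : IsConnected Ω₂)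
    (h12 : Ω₁ ⊆ Ω₂)
    (K₁ K₂ : (Fin n → ℂ) → (Fin n → ℂ) → ℂ)
    (hK₁ : IsBergmanKernel Ω₁ K₁) (hK₂ : IsBergmanKernel Ω₂ K₂)
    (z w : Fin n → ℂ) (hz : z ∈ Ω₁) (hw : w ∈ Ω₁) :
    ‖K₁ z w - K₂ z w‖
      ≤ ((K₁ z z).re - (K₂ z z).re) + ((K₁ w w).re - (K₂ w w).re) := by
  have key : ∀ c : ℂ, Complex.normSq c = 1 →
      -(((K₁ z z).re - (K₂ z z).re) + ((K₁ w w).re - (K₂ w w).re))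
        ≤ 2 * (c * (K₁ z w - K₂ z w)).re := by
    intro c hc
    have hm := bergman_mono Ω₁ Ω₂ hΩ₁open hΩ₂open h12 K₁ K₂ hK₁ hK₂ z w hz hw c
    rw [hc] at hm
    have hre : (c * (K₁ z w - K₂ z w)).re = (c * K₁ z w).re - (c * K₂ z w).re := by
      rw [mul_sub, Complex.sub_re]
    rw [hre]
    linarith
  have h1 := key 1 (by simp)
  have h2 := key (-1) (by simp)
  have h3 := key Complex.I (by simp)
  have h4 := key (-Complex.I) (by simp)
  simp only [one_mul, neg_mul, Complex.neg_re, Complex.I_mul_re] at h1 h2 h3 h4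
  have habs : ‖K₁ z w - K₂ z w‖
      ≤ |(K₁ z w - K₂ z w).re| + |(K₁ z w - K₂ z w).im| := by
    exact Complex.norm_le_abs_re_add_abs_im _
  have hre_bound : |(K₁ z w - K₂ z w).re|
      ≤ (((K₁ z z).re - (K₂ z z).re) + ((K₁ w w).re - (K₂ w w).re)) / 2 :=
    abs_le.mpr ⟨by linarith, by linarith⟩
  have him_bound : |(K₁ z w - K₂ z w).im|
      ≤ (((K₁ z z).re - (K₂ z z).re) + ((K₁ w w).re - (K₂ w w).re)) / 2 :=
    abs_le.mpr ⟨by linarith, by linarith⟩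
  linarith
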